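/- arXiv:1312.5654 — 4 statements merged into one kernel-verified Lean document; each statement's English description precedes it below -/
import Mathlib

section
/- Let G be a group acting faithfully by homeomorphisms on an infinite Hausdorff space X, and let N be a non-trivial normal subgroup of G. Then there exists a non-empty open subset U of X such that the commutator subgroup of G_(U) (the subgroup of elements of G acting trivially on X \ U) is contained in N. -/
/-- The subgroup of elements of `G` acting (via `φ`) trivially outside of `U`. -/
def fixingOutside {G X : Type*} [Group G] (φ : G →* Equiv.Perm X) (U : Set X) :
    Subgroup G where
  carrier := {g | ∀ x ∉ U, φ g x = x}
  one_mem' := by intro x _; simp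
  mul_mem' := by
    intro a b ha hb x hx
    have h1 := hb x hx
    have h2 := ha x hx
    simp only [map_mul, Equiv.Perm.mul_apply, h1, h2]
  inv_mem' := by
    intro a ha x hx
    simp only [map_inv]
    exact Equiv.injective (φ a) (by rw [← Equiv.Perm.mul_apply, mul_inv_cancel, Equiv.Perm.one_apply, ha x hx])

/-- Lemma 4.2 (Lemma `lem:basic`): if a group `G` acts faithfully by homeomorphisms on an
infinite Hausdorff space `X`, then for every non-trivial normal subgroup `N` of `G` there is a
non-empty open set `U ⊆ X` such that the commutator subgroup of `G_(U)` is contained in `N`. -/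
theorem exists_open_commutator_le_of_normal
    {G X : Type*} [Group G] [TopologicalSpace X] [T2Space X] [Infinite X]
    (φ : G →* Equiv.Perm X) (hfaithful : Function.Injective φ)
    (hcont : ∀ g : G, Continuous (φ g))
    (N : Subgroup G) [N.Normal] (hN : N ≠ ⊥) :
    ∃ U : Set X, IsOpen U ∧ U.Nonempty ∧
      ⁅fixingOutside φ U, fixingOutside φ U⁆ ≤ N := by
  -- get a nontrivial element g of N
  obtain ⟨g, hgN, hg1⟩ : ∃ g ∈ N, g ≠ 1 := by
    by_contra h
    push_neg at h
    exact hN (Subgroup.eq_bot_iff_forall N |>.mpr h)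
  -- g moves some point p
  have : φ g ≠ 1 := fun h => hg1 (hfaithful (by simp [h]))
  obtain ⟨p, hp⟩ : ∃ p, φ g p ≠ p := by
    by_contra h
    push_neg at h
    exact this (Equiv.ext fun x => (h x).trans (Equiv.Perm.one_apply x).symm)
  -- disjoint open neighborhoods
  obtain ⟨W, V, hW, hV, hgpW, hpV, hWV⟩ := t2_separation hp
  refine ⟨V ∩ (φ g) ⁻¹' W, (hV.inter ((hW.preimage (hcont g)))), ⟨p, hpV, hgpW⟩, ?_⟩
  set U : Set X := V ∩ (φ g) ⁻¹' W with hU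
  -- key disjointness: g maps U off of U
  have hdisj : ∀ x ∈ U, φ g x ∉ U := by
    intro x hx hgx
    exact Set.disjoint_left.mp hWV hx.2 hgx.1
  -- membership in fixingOutside preserves U
  have hpres : ∀ h ∈ fixingOutside φ U, ∀ x ∈ U, φ h x ∈ U := by
    intro h hh x hx
    by_contra hcx
    have h1 : h⁻¹ ∈ fixingOutside φ U := inv_mem hh
    have := h1 (φ h x) hcx
    rw [map_inv, ← Equiv.Perm.mul_apply, inv_mul_cancel, Equiv.Perm.one_apply] at this
    rw [← this] at hcx
    exact hcx hx
  rw [Subgroup.commutator_le]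
  intro h₁ hh₁ h₂ hh₂
  set c : G := g * h₂⁻¹ * g⁻¹ with hc
  -- c commutes with h₁
  have hcomm : h₁ * c = c * h₁ := by
    apply hfaithful
    ext x
    simp only [map_mul, Equiv.Perm.mul_apply]
    have hc_apply : ∀ y, φ c y = φ g (φ h₂⁻¹ (φ g⁻¹ y)) := by
      intro y; simp [hc, map_mul, Equiv.Perm.mul_apply]
    by_cases hxg : φ g⁻¹ x ∈ U
    · -- x ∈ gU, so x ∉ U, and c x ∈ gU so c x ∉ U
      have hxU : x ∉ U := by
        intro hxU
        have := hdisj _ hxg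
        rw [map_inv, ← Equiv.Perm.mul_apply, mul_inv_cancel, Equiv.Perm.one_apply] at this
        exact this hxU
      have hcxU : φ c x ∉ U := by
        have h2U : φ h₂⁻¹ (φ g⁻¹ x) ∈ U := hpres _ (inv_mem hh₂) _ hxg
        rw [hc_apply]
        exact hdisj _ h2U
      rw [hh₁ x hxU, hh₁ _ hcxU]
    · -- x ∉ gU, so c fixes x, and h₁ x ∉ gU so c fixes h₁ x
      have hcx : φ c x = x := by
        have h2fix : φ h₂⁻¹ (φ g⁻¹ x) = φ g⁻¹ x :=
          (inv_mem hh₂ : h₂⁻¹ ∈ fixingOutside φ U) _ hxg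
        rw [hc_apply, h2fix, map_inv, ← Equiv.Perm.mul_apply, mul_inv_cancel, Equiv.Perm.one_apply]
      rw [hcx]
      have hh1x : φ g⁻¹ (φ h₁ x) ∉ U := by
        by_cases hxU : x ∈ U
        · intro hmem
          have := hdisj _ hmem
          rw [map_inv, ← Equiv.Perm.mul_apply, mul_inv_cancel, Equiv.Perm.one_apply] at this
          exact this (hpres _ hh₁ _ hxU)
        · rw [hh₁ x hxU]; exact hxg
      rw [hc_apply]
      rw [show φ h₂⁻¹ (φ g⁻¹ (φ h₁ x)) = φ g⁻¹ (φ h₁ x) from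
        (inv_mem hh₂ : h₂⁻¹ ∈ fixingOutside φ U) _ hh1x]
      rw [map_inv, ← Equiv.Perm.mul_apply, mul_inv_cancel, Equiv.Perm.one_apply]
  -- k = [h₂, g] ∈ N, and ⁅h₁, h₂⁆ = ⁅h₁, h₂ * c⁆ = ⁅h₁, k⁆
  have hkN : h₂ * c ∈ N := by
    have : h₂ * g * h₂⁻¹ ∈ N := Subgroup.Normal.conj_mem ‹N.Normal› g hgN h₂
    have := N.mul_mem this (N.inv_mem hgN)
    simpa [hc, mul_assoc] using this
  have hcomm' : c * h₁⁻¹ = h₁⁻¹ * c := by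
    have : h₁⁻¹ * (h₁ * c) * h₁⁻¹ = h₁⁻¹ * (c * h₁) * h₁⁻¹ := by rw [hcomm]
    simpa [mul_assoc] using this
  open scoped commutatorElement in
  have heq : ⁅h₁, h₂⁆ = ⁅h₁, h₂ * c⁆ := by
    simp only [commutatorElement_def, mul_inv_rev, ← mul_assoc]
    rw [show h₁ * h₂ * c * h₁⁻¹ = h₁ * h₂ * h₁⁻¹ * c by
      rw [mul_assoc (h₁ * h₂), hcomm', ← mul_assoc]]
    group
  rw [heq]
  have : h₁ * (h₂ * c) * h₁⁻¹ ∈ N := Subgroup.Normal.conj_mem ‹N.Normal› _ hkN h₁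
  exact N.mul_mem this (N.inv_mem hkN)
end

section
/- Let X be a finite alphabet with d = |X| ≥ 2 elements. For a clopen subset U of the Cantor space X^ω, write U as a finite disjoint union of n cylinder sets v_i X^ω. Then the residue of n modulo d−1 is independent of the chosen decomposition. -/
/-- The cylinder set `vX^ω` of all infinite sequences beginning with the finite word `v`. -/
def cylinder {X : Type*} (v : List X) : Set (ℕ → X) :=
  {w | ∀ i : Fin v.length, w i = v.get i}

namespace CylAux

variable {X : Type*}

/-- An explicit element of `cylinder v`, given a default letter. -/
def ext (v : List X) (a : X) : ℕ → X :=
  fun i => if h : i < v.length then v.get ⟨i, h⟩ else a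

lemma ext_mem (v : List X) (a : X) : ext v a ∈ cylinder v := by
  intro i
  simp [ext, i.isLt]

lemma cylinder_nonempty (v : List X) (a : X) : (cylinder v).Nonempty :=
  ⟨ext v a, ext_mem v a⟩

lemma cylinder_subset_of_prefix {v u : List X} (h : v <+: u) :
    cylinder u ⊆ cylinder v := by
  intro x hx i
  have hiu : i.val < u.length := lt_of_lt_of_le i.isLt h.length_le
  have hx' := hx ⟨i.val, hiu⟩
  simp only [List.get_eq_getElem] at hx' ⊢
  rw [hx']
  exact (h.getElem i.isLt).symm

lemma mem_cylinder_ofFn {N : ℕ} (w : Fin N → X) (x : ℕ → X) :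
    x ∈ cylinder (List.ofFn w) ↔ ∀ i : Fin N, x i = w i := by
  constructor
  · intro hx i
    have := hx ⟨i.val, by simp [i.isLt]⟩
    simpa using this
  · intro hx i
    have hi : i.val < N := by have := i.isLt; simpa using this
    have := hx ⟨i.val, hi⟩
    simpa [List.get_eq_getElem] using this

lemma prefix_ofFn_of_mem {N : ℕ} {w : Fin N → X} {v : List X} (hlen : v.length ≤ N)
    {x : ℕ → X} (hxw : x ∈ cylinder (List.ofFn w)) (hxv : x ∈ cylinder v) :
    v <+: List.ofFn w := by
  rw [List.prefix_iff_eq_take]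
  apply List.ext_getElem
  · simp [hlen]
  · intro i h1 h2
    have hiN : i < N := lt_of_lt_of_le h1 hlen
    have e1 : x i = w ⟨i, hiN⟩ := (mem_cylinder_ofFn w x).1 hxw ⟨i, hiN⟩
    have e2 : x i = v.get ⟨i, h1⟩ := hxv ⟨i, h1⟩
    simp only [List.getElem_take, List.getElem_ofFn]
    rw [List.get_eq_getElem] at e2
    rw [← e2, e1]

lemma cylinder_ofFn_subset_of_prefix {N : ℕ} {w : Fin N → X} {v : List X}
    (h : v <+: List.ofFn w) : cylinder (List.ofFn w) ⊆ cylinder v :=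
  cylinder_subset_of_prefix h

open Finset in
lemma card_prefix_filter [Fintype X] [DecidableEq X] {N : ℕ} (v : List X) (h : v.length ≤ N) :
    (Finset.univ.filter fun w : Fin N → X => v <+: List.ofFn w).card
      = Fintype.card X ^ (N - v.length) := by
  classical
  have hc : Fintype.card X ^ (N - v.length) = Fintype.card (Fin (N - v.length) → X) := by
    simp
  rw [hc, ← Finset.card_univ]
  refine Finset.card_nbij' (fun w => fun j : Fin (N - v.length) => w ⟨v.length + j.val, by omega⟩)
    (fun u => fun i : Fin N => if hi : i.val < v.length then v.get ⟨i.val, hi⟩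
      else u ⟨i.val - v.length, by omega⟩) ?_ ?_ ?_ ?_
  · intro w hw
    exact Finset.mem_univ _
  · intro u hu
    simp only [Finset.mem_coe, Finset.mem_filter, Finset.mem_univ, true_and]
    rw [List.prefix_iff_eq_take]
    apply List.ext_getElem
    · simp [h]
    · intro i h1 h2
      simp only [List.getElem_take, List.getElem_ofFn]
      simp [h1]
  · intro w hw
    simp only [Finset.mem_coe, Finset.mem_filter, Finset.mem_univ, true_and] at hw
    funext i
    by_cases hi : i.val < v.length
    · simp only [hi, dif_pos]
      have := hw.getElem hi
      simpa [List.get_eq_getElem] using this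
    · simp only [dif_neg hi]
      have he : (⟨v.length + (i.val - v.length), by omega⟩ : Fin N) = i := by
        apply Fin.ext
        show v.length + (i.val - v.length) = i.val
        omega
      exact congrArg w he
  · intro u hu
    funext j
    simp

end CylAux

section
open CylAux
attribute [local instance] Classical.propDecidable

/-- Counting lemma: the number of words of length `N` whose cylinder lies in `U` is congruent
to the number of cylinders in a disjoint decomposition, mod `d - 1`. -/
lemma key_count {X : Type*} [Fintype X] (a : X)
    {U : Set (ℕ → X)} {L : List (List X)}
    (hdisj : L.Pairwise fun v u => Disjoint (cylinder v) (cylinder u))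
    (hcover : ⋃ v ∈ L, cylinder v = U) {N : ℕ} (hN : ∀ v ∈ L, v.length ≤ N) :
    (Finset.univ.filter fun w : Fin N → X => cylinder (List.ofFn w) ⊆ U).card
      ≡ L.length [MOD Fintype.card X - 1] := by
  classical
  -- nodup
  have hnd : L.Nodup := by
    refine List.Pairwise.imp ?_ hdisj
    intro v u hvu
    rintro rfl
    exact (cylinder_nonempty v a).ne_empty (disjoint_self.mp hvu)
  -- the good set decomposes as a disjoint union
  have hset : (Finset.univ.filter fun w : Fin N → X => cylinder (List.ofFn w) ⊆ U)
      = L.toFinset.biUnion (fun v => Finset.univ.filter fun w : Fin N → X => v <+: List.ofFn w) := by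
    ext w
    simp only [Finset.mem_filter, Finset.mem_univ, true_and, Finset.mem_biUnion, List.mem_toFinset]
    constructor
    · intro hw
      have hx : ext (List.ofFn w) a ∈ U := hw (ext_mem _ a)
      rw [← hcover] at hx
      simp only [Set.mem_iUnion] at hx
      obtain ⟨v, hv, hxv⟩ := hx
      exact ⟨v, hv, prefix_ofFn_of_mem (hN v hv) (ext_mem _ a) hxv⟩
    · rintro ⟨v, hv, hpre⟩
      refine (cylinder_ofFn_subset_of_prefix hpre).trans ?_
      rw [← hcover]
      exact Set.subset_biUnion_of_mem hv
  -- pairwise symmetric disjointness of members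
  have hdisj' : ∀ v ∈ L, ∀ u ∈ L, v ≠ u → Disjoint (cylinder v) (cylinder u) := by
    intro v hv u hu hne
    haveI : Std.Symm (fun v u : List X => Disjoint (cylinder v) (cylinder u)) := ⟨fun _ _ h => h.symm⟩
    exact hdisj.forall hv hu hne
  rw [hset, Finset.card_biUnion]
  · -- sum of powers ≡ length
    have hstep : ∀ v ∈ L.toFinset,
        (Finset.univ.filter fun w : Fin N → X => v <+: List.ofFn w).card
          = Fintype.card X ^ (N - v.length) := by
      intro v hv
      exact card_prefix_filter v (hN v (List.mem_toFinset.mp hv))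
    rw [Finset.sum_congr rfl hstep]
    have hlen : L.toFinset.card = L.length := List.toFinset_card_of_nodup hnd
    rw [← hlen]
    -- use ZMod
    rw [← ZMod.natCast_eq_natCast_iff]
    push_cast
    have hone : (Fintype.card X : ZMod (Fintype.card X - 1)) = 1 := by
      have h1 : 0 < Fintype.card X := Fintype.card_pos_iff.mpr ⟨a⟩
      have h2 : Fintype.card X = (Fintype.card X - 1) + 1 := by omega
      rw [h2]
      push_cast
      simp [ZMod.natCast_self]
    rw [Finset.sum_congr rfl (fun v _ => by rw [hone, one_pow])]
    simp
  · -- pairwise disjoint finsets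
    intro v hv u hu hne
    rw [Finset.mem_coe, List.mem_toFinset] at hv hu
    rw [Function.onFun, Finset.disjoint_left]
    intro w hwv hwu
    simp only [Finset.mem_filter, Finset.mem_univ, true_and] at hwv hwu
    have hsub : (cylinder (List.ofFn w) : Set (ℕ → X)) ⊆ cylinder v ∩ cylinder u :=
      Set.subset_inter (cylinder_ofFn_subset_of_prefix hwv) (cylinder_ofFn_subset_of_prefix hwu)
    have hne' : (cylinder (List.ofFn w) : Set (ℕ → X)).Nonempty := cylinder_nonempty _ a
    have := (hdisj' v hv u hu hne).inter_eq
    rw [this] at hsub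
    exact absurd (hsub hne'.choose_spec) (Set.notMem_empty _)

/-- Proposition 4.7 (first part): for a clopen subset `U` of the Cantor space `X^ω` over an
alphabet with `d ≥ 2` letters, the number of cylinders in any decomposition of `U` into a
finite disjoint union of cylinder sets is well defined modulo `d - 1`. -/
theorem card_decomposition_modEq
    {X : Type*} [Fintype X] [TopologicalSpace X] [DiscreteTopology X] (hd : 2 ≤ Fintype.card X)
    (U : Set (ℕ → X)) (hU : IsClopen U)
    (L₁ L₂ : List (List X))
    (hdisj₁ : L₁.Pairwise fun v u => Disjoint (cylinder v) (cylinder u))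
    (hdisj₂ : L₂.Pairwise fun v u => Disjoint (cylinder v) (cylinder u))
    (hcover₁ : ⋃ v ∈ L₁, cylinder v = U)
    (hcover₂ : ⋃ v ∈ L₂, cylinder v = U) :
    L₁.length ≡ L₂.length [MOD Fintype.card X - 1] := by
  classical
  have hX : Nonempty X := Fintype.card_pos_iff.mp (by omega)
  obtain ⟨a⟩ := hX
  set N : ℕ := ((L₁ ++ L₂).map List.length).foldr max 0 with hNdef
  have hmem : ∀ v ∈ L₁ ++ L₂, v.length ≤ N := by
    intro v hv
    have : v.length ∈ ((L₁ ++ L₂).map List.length) := List.mem_map_of_mem hv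
    exact List.le_max_of_le (l := ((L₁ ++ L₂).map List.length)) this le_rfl
  have h1 := key_count a hdisj₁ hcover₁ (N := N) (fun v hv => hmem v (List.mem_append_left _ hv))
  have h2 := key_count a hdisj₂ hcover₂ (N := N) (fun v hv => hmem v (List.mem_append_right _ hv))
  exact h1.symm.trans h2

end
end

section
/- Let Φ be a G-biset (a set with commuting left and right G-actions) whose right action is free with finitely many orbits, and let X ⊆ Φ be a transversal of the right orbits. Then every element of Φ is uniquely expressible as x · g for x ∈ X and g ∈ G, and the map ψ sending g ∈ G to the permutation-with-labels determined by g · x = y · h defines a group homomorphism G → Sym(X) ⋉ G^X (with the wreath product multiplication). -/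
/-- A `G`-biset: a set with commuting left and right `G`-actions. -/
structure BisetStr (G : Type*) [Group G] (Φ : Type*) where
  /-- the left action -/
  l : G → Φ → Φ
  /-- the right action -/
  r : Φ → G → Φ
  l_one : ∀ a, l 1 a = a
  l_mul : ∀ g h a, l (g * h) a = l g (l h a)
  r_one : ∀ a, r a 1 = a
  r_mul : ∀ a g h, r a (g * h) = r (r a g) h
  comm : ∀ g a h, l g (r a h) = r (l g a) h

/-- The right action of a biset is free. -/
def BisetStr.RightFree {G Φ : Type*} [Group G] (B : BisetStr G Φ) : Prop :=
  ∀ a g, B.r a g = a → g = 1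

/-- `T` is a transversal of the orbits of the right action: every element lies in the right
orbit of exactly one element of `T`. -/
def BisetStr.IsTransversal {G Φ : Type*} [Group G] (B : BisetStr G Φ) (T : Set Φ) : Prop :=
  (∀ a : Φ, ∃ x ∈ T, ∃ g : G, a = B.r x g) ∧
    ∀ x ∈ T, ∀ y ∈ T, (∃ g : G, y = B.r x g) → x = y

/-- For a covering `G`-biset `Φ` (free right action with finitely many orbits) with a right
orbit transversal `X ⊆ Φ`: every element of `Φ` is uniquely of the form `x · g` with
`x ∈ X`, `g ∈ G`, and the wreath recursion `g · x = σ_g(x) · sec_g(x)` defines a group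
homomorphism `G → Sym(X) ⋉ G^X`: `σ` is multiplicative into permutations of `X` and `sec`
satisfies the wreath-product multiplication rule. -/
theorem covering_biset_wreath_recursion
    {G Φ : Type*} [Group G] (B : BisetStr G Φ)
    (hfree : B.RightFree) (T : Set Φ) (hTfin : T.Finite) (hT : B.IsTransversal T) :
    (∀ a : Φ, ∃! p : T × G, B.r (p.1 : Φ) p.2 = a) ∧
      ∃ (σ : G → T → T) (sec : G → T → G),
        (∀ (g : G) (x : T), B.l g (x : Φ) = B.r (σ g x : Φ) (sec g x)) ∧
        (∀ g : G, Function.Bijective (σ g)) ∧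
        (∀ (g h : G) (x : T), σ (g * h) x = σ g (σ h x)) ∧
        (∀ (g h : G) (x : T), sec (g * h) x = sec g (σ h x) * sec h x) := by

  classical
  -- uniqueness of decomposition
  have huniq : ∀ a : Φ, ∃! p : T × G, B.r (p.1 : Φ) p.2 = a := by
    intro a
    obtain ⟨x, hx, g, hg⟩ := hT.1 a
    refine ⟨(⟨x, hx⟩, g), hg.symm, ?_⟩
    rintro ⟨⟨y, hy⟩, h⟩ hyh
    have hy' : y = B.r x (g * h⁻¹) := by
      rw [B.r_mul, ← hg, ← hyh, ← B.r_mul, mul_inv_cancel, B.r_one]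
    have hxy : x = y := hT.2 x hx y hy ⟨_, hy'⟩
    have : B.r x (g * h⁻¹) = x := by rw [← hy', hxy]
    have hgh : g * h⁻¹ = 1 := hfree _ _ this
    have : g = h := by
      have := mul_eq_one_iff_eq_inv.mp hgh
      simpa using this
    simp only [Prod.mk.injEq, Subtype.mk.injEq]
    exact ⟨hxy.symm, this.symm⟩
  refine ⟨huniq, ?_⟩
  choose F hF hF' using huniq
  set σ : G → T → T := fun g x => (F (B.l g (x : Φ))).1 with hσdef
  set sec : G → T → G := fun g x => (F (B.l g (x : Φ))).2 with hsecdef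
  have key : ∀ (g : G) (x : T), B.l g (x : Φ) = B.r (σ g x : Φ) (sec g x) :=
    fun g x => (hF (B.l g (x : Φ))).symm
  have hmul : ∀ (g h : G) (x : T),
      σ (g * h) x = σ g (σ h x) ∧ sec (g * h) x = sec g (σ h x) * sec h x := by
    intro g h x
    have : B.r (σ g (σ h x) : Φ) (sec g (σ h x) * sec h x) = B.l (g * h) (x : Φ) := by
      rw [B.r_mul, ← key, ← B.comm, ← key, ← B.l_mul]
    have h2 := hF' (B.l (g * h) (x : Φ)) (σ g (σ h x), sec g (σ h x) * sec h x) this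
    constructor
    · show (F (B.l (g * h) (x : Φ))).1 = _
      rw [← h2]
    · show (F (B.l (g * h) (x : Φ))).2 = _
      rw [← h2]
  have hone : ∀ x : T, σ 1 x = x ∧ sec 1 x = 1 := by
    intro x
    have : B.r (x : Φ) 1 = B.l 1 (x : Φ) := by rw [B.r_one, B.l_one]
    have h2 := hF' (B.l 1 (x : Φ)) (x, 1) this
    constructor
    · show (F (B.l 1 (x : Φ))).1 = _
      rw [← h2]
    · show (F (B.l 1 (x : Φ))).2 = _
      rw [← h2]
  have hbij : ∀ g : G, Function.Bijective (σ g) := by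
    intro g
    have hli : Function.LeftInverse (σ g⁻¹) (σ g) := fun x => by
      rw [← (hmul g⁻¹ g x).1, inv_mul_cancel, (hone x).1]
    have hri : Function.RightInverse (σ g⁻¹) (σ g) := fun x => by
      rw [← (hmul g g⁻¹ x).1, mul_inv_cancel, (hone x).1]
    exact ⟨hli.injective, hri.surjective⟩
  exact ⟨σ, sec, key, hbij, fun g h x => (hmul g h x).1, fun g h x => (hmul g h x).2⟩
end

section
/- Two left-infinite sequences …x₂x₁ and …y₂y₁ in X^{−ω} are asymptotically equivalent with respect to a contracting self-similar group G (i.e., there is a sequence g_n taking finitely many values in G with g_n(x_n…x₁) = y_n…y₁ for all n) if and only if there is a sequence h_n of elements of the nucleus N of G satisfying h_n(x_n) = y_n and h_n|_{x_n} = h_{n−1} for all n ≥ 1 (with h₀ arbitrary in N). -/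
/-- The finite word `x_n … x₂ x₁` determined by the first `n` letters of a left-infinite
sequence `… x₂ x₁` (encoded as `x : ℕ → X` with `x k` the letter `x_{k+1}`). -/
def wordOf {X : Type*} (x : ℕ → X) (n : ℕ) : List X :=
  (List.range n).reverse.map x

theorem wordOf_succ {X : Type*} (x : ℕ → X) (n : ℕ) :
    wordOf x (n + 1) = x n :: wordOf x n := by
  simp [wordOf, List.range_succ]

theorem wordOf_add {X : Type*} (x : ℕ → X) (n k : ℕ) :
    wordOf x (n + k) = ((List.range' n k).map x).reverse ++ wordOf x n := by
  induction k with
  | zero => simp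
  | succ k ih =>
    rw [← Nat.add_assoc, wordOf_succ, ih, List.range'_concat]
    simp

theorem range'_split {X : Type*} (x : ℕ → X) (n k : ℕ) :
    ((List.range' n (k + 1)).map x).reverse
      = ((List.range' (n + 1) k).map x).reverse ++ [x n] := by
  rw [List.range'_succ]
  simp

/-- Two left-infinite sequences `…x₂x₁` and `…y₂y₁` are asymptotically equivalent with
respect to a contracting self-similar group `G` (there is a sequence `g_n` taking finitely
many values with `g_n(x_n…x₁) = y_n…y₁` for all `n`) if and only if the equivalence is
witnessed by a left-infinite path in the Moore diagram of the nucleus `N`: a sequence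
`h_n ∈ N` with `h_n(x_n) = y_n` and `h_n|_{x_n} = h_{n−1}`. -/
theorem asymptotic_equivalence_iff_nucleus_path
    {G X : Type*} [Group G] [Nonempty X]
    (φ : G →* Equiv.Perm (List X)) (hfaithful : Function.Injective φ)
    (hlen : ∀ (g : G) (v : List X), (φ g v).length = v.length)
    (sec : G → List X → G)
    (hsec : ∀ (g : G) (v w : List X), φ g (v ++ w) = φ g v ++ φ (sec g v) w)
    (N : Set G) (hNfin : N.Finite)
    (hNcontr : ∀ g : G, ∃ n : ℕ, ∀ v : List X, n ≤ v.length → sec g v ∈ N)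
    (hNmin : ∀ M : Set G, M.Finite →
      (∀ g : G, ∃ n : ℕ, ∀ v : List X, n ≤ v.length → sec g v ∈ M) → N ⊆ M)
    (x y : ℕ → X) :
    (∃ F : Set G, F.Finite ∧ ∃ g : ℕ → G, (∀ n, g n ∈ F) ∧
        ∀ n, φ (g n) (wordOf x n) = wordOf y n) ↔
      (∃ h : ℕ → G, (∀ n, h n ∈ N) ∧
        ∀ n : ℕ, φ (h (n + 1)) [x n] = [y n] ∧ sec (h (n + 1)) [x n] = h n) := by
  have phinil : ∀ gg : G, φ gg ([] : List X) = [] := fun gg =>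
    List.length_eq_zero_iff.mp (by simpa using hlen gg [])
  have secapp : ∀ (gg : G) (u v : List X), sec gg (u ++ v) = sec (sec gg u) v := by
    intro gg u v
    apply hfaithful
    apply Equiv.ext
    intro w
    have e1 : φ gg (u ++ v ++ w) = φ gg u ++ φ (sec gg u) v ++ φ (sec (sec gg u) v) w := by
      rw [List.append_assoc, hsec, hsec, List.append_assoc]
    have e2 : φ gg (u ++ v ++ w) = φ gg u ++ φ (sec gg u) v ++ φ (sec gg (u ++ v)) w := by
      rw [hsec gg (u ++ v) w, hsec]
    have e3 := e1.symm.trans e2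
    rw [List.append_assoc, List.append_assoc] at e3
    have e4 := List.append_cancel_left e3
    exact (List.append_cancel_left e4).symm
  constructor
  · rintro ⟨F, hFfin, g, hgF, hg⟩
    choose b hb using hNcontr
    obtain ⟨B, hB⟩ := (hFfin.image b).bddAbove
    set S : ℕ → ℕ → G :=
      fun n m => sec (g m) (((List.range' n (m - n)).map x).reverse) with hSdef
    have hSA : ∀ n m, n ≤ m → φ (S n m) (wordOf x n) = wordOf y n := by
      intro n m hnm
      obtain ⟨k, rfl⟩ := Nat.exists_eq_add_of_le hnm
      have hk : n + k - n = k := by omega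
      simp only [hSdef, hk]
      have h1 := hg (n + k)
      rw [wordOf_add x, wordOf_add y, hsec] at h1
      have hl : (φ (g (n + k)) (((List.range' n k).map x).reverse)).length
          = (((List.range' n k).map y).reverse).length := by
        rw [hlen]; simp
      exact (List.append_inj h1 hl).2
    have hSB : ∀ n m, n + 1 ≤ m → sec (S (n + 1) m) [x n] = S n m := by
      intro n m hnm
      obtain ⟨k, rfl⟩ := Nat.exists_eq_add_of_le hnm
      have hk1 : n + 1 + k - (n + 1) = k := by omega
      have hk2 : n + 1 + k - n = k + 1 := by omega
      simp only [hSdef, hk1, hk2]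
      rw [range'_split, secapp]
    have hSN : ∀ n m, n + B ≤ m → S n m ∈ N := by
      intro n m hnm
      apply hb
      have h1 : b (g m) ≤ B := hB ⟨g m, hgF m, rfl⟩
      simp only [List.length_reverse, List.length_map, List.length_range']
      omega
    set U : Ultrafilter ℕ := Ultrafilter.of Filter.atTop with hUdef
    have hUat : ∀ s : Set ℕ, s ∈ (Filter.atTop : Filter ℕ) → s ∈ U :=
      fun s hs => Ultrafilter.of_le _ hs
    have hclaim : ∀ n : ℕ, ∃ a ∈ N, {m | n + B ≤ m ∧ S n m = a} ∈ U := by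
      intro n
      have hA : {m : ℕ | n + B ≤ m} ∈ U := hUat _ (Filter.mem_atTop (n + B))
      have hsub : {m : ℕ | n + B ≤ m} ⊆ ⋃ a ∈ N, {m | n + B ≤ m ∧ S n m = a} := by
        intro m hm
        exact Set.mem_biUnion (hSN n m hm) ⟨hm, rfl⟩
      have hU2 : (⋃ a ∈ N, {m | n + B ≤ m ∧ S n m = a}) ∈ U :=
        Filter.mem_of_superset hA hsub
      exact (Ultrafilter.finite_biUnion_mem_iff hNfin).mp hU2
    choose h hhN hhU using hclaim
    refine ⟨h, hhN, ?_⟩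
    intro n
    have hmem : ({m | n + 1 + B ≤ m ∧ S (n + 1) m = h (n + 1)}
        ∩ {m | n + B ≤ m ∧ S n m = h n}).Nonempty :=
      Filter.nonempty_of_mem (Filter.inter_mem (hhU (n + 1)) (hhU n))
    obtain ⟨m, ⟨hm1, hS1⟩, hm2, hS2⟩ := hmem
    have hn1m : n + 1 ≤ m := by omega
    have hB1 : sec (h (n + 1)) [x n] = h n := by
      rw [← hS1, hSB n m hn1m, hS2]
    refine ⟨?_, hB1⟩
    have hA1 : φ (h (n + 1)) (wordOf x (n + 1)) = wordOf y (n + 1) := by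
      rw [← hS1]; exact hSA (n + 1) m hn1m
    have hA2 : φ (h (n + 1)) ([x n] ++ wordOf x n) = [y n] ++ wordOf y n := by
      simpa [wordOf_succ] using hA1
    rw [hsec] at hA2
    have hl1 : (φ (h (n + 1)) [x n]).length = ([y n] : List X).length := by
      rw [hlen]; simp
    exact (List.append_inj hA2 hl1).1
  · rintro ⟨h, hhN, hh⟩
    refine ⟨N, hNfin, h, hhN, ?_⟩
    intro n
    induction n with
    | zero => simpa [wordOf] using phinil (h 0)
    | succ n ih =>
      have : φ (h (n + 1)) ([x n] ++ wordOf x n) = [y n] ++ wordOf y n := by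
        rw [hsec, (hh n).1, (hh n).2, ih]
      simpa [wordOf_succ] using this
end
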